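/- arXiv:1002.3800 — 2 statements merged into one kernel-verified Lean document; each statement's English description precedes it below -/
import Mathlib

section
/- Localization of the level sets of the maximal function. Let n ≥ 1, let F : ℝⁿ → [0,∞) be locally integrable, let λ > 0 and K ≥ 2^{n+2}. Let z ∈ ℝⁿ, r > 0, set Q = B(z, r) and B = B(z, 16r) (open Euclidean balls), and suppose there exists a point x₀ with |x₀ − z| ≤ 4r and MF(x₀) ≤ λ. Then |{MF > Kλ} ∩ Q| ≤ |{M(F·1_B) > Kλ/2}|, where 1_B is the characteristic function of B. -/
open MeasureTheory Metric Set
open scoped ENNReal NNReal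

noncomputable section

/-- Uncentered Hardy–Littlewood maximal function over open Euclidean balls,
with values in `ℝ≥0∞`. -/
def maxFun (n : ℕ) (u : EuclideanSpace ℝ (Fin n) → ℝ) (x : EuclideanSpace ℝ (Fin n)) : ℝ≥0∞ :=
  ⨆ (c : EuclideanSpace ℝ (Fin n)) (r : ℝ) (_ : x ∈ ball c r),
    (volume (ball c r))⁻¹ * ∫⁻ y in ball c r, ENNReal.ofReal |u y|

/-- Localization of the level sets of the maximal function: if `MF(x₀) ≤ λ` at some point
`x₀` with `|x₀ - z| ≤ 4r`, then `|{MF > Kλ} ∩ B(z,r)| ≤ |{M(F·1_{B(z,16r)}) > Kλ/2}|`. -/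
theorem statement4
    (n : ℕ) (hn : 1 ≤ n)
    (F : EuclideanSpace ℝ (Fin n) → ℝ) (hFmeas : Measurable F) (hFnonneg : ∀ x, 0 ≤ F x)
    (hFloc : LocallyIntegrable F volume)
    (lam K : ℝ) (hlam : 0 < lam) (hK : (2 : ℝ) ^ (n + 2) ≤ K)
    (z : EuclideanSpace ℝ (Fin n)) (r : ℝ) (hr : 0 < r)
    (x₀ : EuclideanSpace ℝ (Fin n)) (hx₀ : dist x₀ z ≤ 4 * r)
    (hMx₀ : maxFun n F x₀ ≤ ENNReal.ofReal lam) :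
    volume ({x | ENNReal.ofReal (K * lam) < maxFun n F x} ∩ ball z r)
      ≤ volume {x | ENNReal.ofReal (K * lam / 2)
          < maxFun n (Set.indicator (ball z (16 * r)) F) x} := by
  have hKpos : (0:ℝ) < K := lt_of_lt_of_le (by positivity) hK
  apply measure_mono
  rintro x ⟨hx1, hxQ⟩
  simp only [Set.mem_setOf_eq, maxFun, lt_iSup_iff] at hx1 ⊢
  obtain ⟨c, ρ, hxmem, hgt⟩ := hx1
  have hxc : dist x c < ρ := mem_ball.mp hxmem
  have hρpos : 0 < ρ := lt_of_le_of_lt dist_nonneg hxc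
  have hxz : dist x z < r := mem_ball.mp hxQ
  -- Key geometric claim: the ball is inside B(z, 16r)
  have hsub : ball c ρ ⊆ ball z (16 * r) := by
    by_contra hns
    obtain ⟨y, hyB, hyN⟩ := not_subset.mp hns
    have h1 : dist y c < ρ := mem_ball.mp hyB
    have h2 : 16 * r ≤ dist y z := by simpa [mem_ball, not_lt] using hyN
    have htri : dist y z ≤ dist y c + dist c x + dist x z := dist_triangle4 y c x z
    have hcx : dist c x = dist x c := dist_comm c x
    have hρ7 : 7 * r < ρ := by linarith
    -- x₀ ∈ ball c (2ρ)
    have hx₀mem : x₀ ∈ ball c (2 * ρ) := by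
      rw [mem_ball]
      have : dist x₀ c ≤ dist x₀ z + dist z x + dist x c := dist_triangle4 x₀ z x c
      have hzx : dist z x = dist x z := dist_comm z x
      linarith
    -- volume doubling
    have hvne : volume (ball c ρ) ≠ 0 := (measure_ball_pos volume c hρpos).ne'
    have hvnt : volume (ball c ρ) ≠ ⊤ := measure_ball_lt_top.ne
    have hdim : Module.finrank ℝ (EuclideanSpace ℝ (Fin n)) = n := finrank_euclideanSpace_fin
    have hvol : volume (ball c (2 * ρ)) = ENNReal.ofReal (2 ^ n) * volume (ball c ρ) := by
      rw [Measure.addHaar_ball_of_pos volume c (by linarith : (0:ℝ) < 2 * ρ),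
          Measure.addHaar_ball_of_pos volume c hρpos, hdim, mul_pow,
          ENNReal.ofReal_mul (by positivity), mul_assoc]
    have hinv : (volume (ball c ρ))⁻¹
        = ENNReal.ofReal (2 ^ n) * (volume (ball c (2 * ρ)))⁻¹ := by
      rw [hvol, ENNReal.mul_inv (Or.inl (by positivity)) (Or.inl ENNReal.ofReal_ne_top),
          ← mul_assoc, ENNReal.mul_inv_cancel (by positivity) ENNReal.ofReal_ne_top, one_mul]
    -- bound the average
    have hb1 : (∫⁻ y in ball c ρ, ENNReal.ofReal |F y|)
        ≤ ∫⁻ y in ball c (2 * ρ), ENNReal.ofReal |F y| :=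
      lintegral_mono_set (ball_subset_ball (by linarith))
    have hb2 : (volume (ball c (2 * ρ)))⁻¹ * ∫⁻ y in ball c (2 * ρ), ENNReal.ofReal |F y|
        ≤ maxFun n F x₀ :=
      le_iSup_of_le c (le_iSup_of_le (2 * ρ) (le_iSup_of_le hx₀mem le_rfl))
    have hchain : (volume (ball c ρ))⁻¹ * ∫⁻ y in ball c ρ, ENNReal.ofReal |F y|
        ≤ ENNReal.ofReal (K * lam) := by
      calc (volume (ball c ρ))⁻¹ * ∫⁻ y in ball c ρ, ENNReal.ofReal |F y|
          = ENNReal.ofReal (2 ^ n) * ((volume (ball c (2 * ρ)))⁻¹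
              * ∫⁻ y in ball c ρ, ENNReal.ofReal |F y|) := by rw [hinv, mul_assoc]
        _ ≤ ENNReal.ofReal (2 ^ n) * ((volume (ball c (2 * ρ)))⁻¹
              * ∫⁻ y in ball c (2 * ρ), ENNReal.ofReal |F y|) := by
            gcongr
        _ ≤ ENNReal.ofReal (2 ^ n) * maxFun n F x₀ := by gcongr
        _ ≤ ENNReal.ofReal (2 ^ n) * ENNReal.ofReal lam := by gcongr
        _ = ENNReal.ofReal (2 ^ n * lam) := (ENNReal.ofReal_mul (by positivity)).symm
        _ ≤ ENNReal.ofReal (K * lam) := by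
            apply ENNReal.ofReal_le_ofReal
            have : (2:ℝ) ^ n ≤ 2 ^ (n + 2) := by
              apply pow_le_pow_right₀ (by norm_num) (by omega)
            nlinarith
    exact absurd hgt (not_lt.mpr hchain)
  -- Now conclude
  refine ⟨c, ρ, hxmem, ?_⟩
  have hEq : (∫⁻ y in ball c ρ, ENNReal.ofReal |Set.indicator (ball z (16 * r)) F y|)
      = ∫⁻ y in ball c ρ, ENNReal.ofReal |F y| := by
    apply setLIntegral_congr_fun measurableSet_ball
    exact fun y hy => by
      rw [Set.indicator_of_mem (hsub hy)]
  rw [hEq]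
  exact lt_of_le_of_lt (ENNReal.ofReal_le_ofReal (by nlinarith)) hgt

end
end

section
/- Phragmén–Lindelöf bound on a half-plane from a horizontal boundary line and a vertical ray. Let y₀ < 0, c ≥ 0, M > 0 and A > 0. Let F be a complex-valued function that is continuous on the closed half-plane {z ∈ ℂ : Im z ≤ y₀} and holomorphic on its interior {Im z < y₀}, and assume: (i) |F(z)| ≤ M·e^{c|z|} for all z with Im z ≤ y₀; (ii) |F(x + i y₀)| ≤ A for all x ∈ ℝ; (iii) |F(i t)| ≤ A for all real t ≤ y₀. Then |F(z)| ≤ A for every z with Im z ≤ y₀. -/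
open Complex

/-- Phragmén–Lindelöf bound on the half-plane `{Im z ≤ y₀}` (with `y₀ < 0`) from an
exponential growth bound, a bound `A` on the horizontal boundary line `Im z = y₀`, and a
bound `A` on the vertical ray `{it : t ≤ y₀}`. -/
theorem statement12
    (y₀ c M A : ℝ) (hy₀ : y₀ < 0) (hc : 0 ≤ c) (hM : 0 < M) (hA : 0 < A)
    (F : ℂ → ℂ)
    (hcont : ContinuousOn F {z : ℂ | z.im ≤ y₀})
    (hholo : DifferentiableOn ℂ F {z : ℂ | z.im < y₀})
    (hgrowth : ∀ z : ℂ, z.im ≤ y₀ → ‖F z‖ ≤ M * Real.exp (c * ‖z‖))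
    (hline : ∀ x : ℝ, ‖F (x + y₀ * Complex.I)‖ ≤ A)
    (hray : ∀ t : ℝ, t ≤ y₀ → ‖F (t * Complex.I)‖ ≤ A) :
    ∀ z : ℂ, z.im ≤ y₀ → ‖F z‖ ≤ A := by
  set G : ℂ → ℂ := fun w => F (w + y₀ * Complex.I) with hG
  have him_shift : ∀ w : ℂ, (w + y₀ * Complex.I).im = w.im + y₀ := by
    intro w; simp
  -- differentiability / continuity of G
  have hshift : Differentiable ℂ fun w : ℂ => w + y₀ * Complex.I :=
    (differentiable_id).add_const _
  have hGdiff : DifferentiableOn ℂ G {w : ℂ | w.im < 0} := by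
    refine hholo.comp (hshift.differentiableOn) ?_
    intro w hw
    simp only [Set.mem_setOf_eq, him_shift]
    linarith [Set.mem_setOf_eq ▸ hw]
  have hGcont : ContinuousOn G {w : ℂ | w.im ≤ 0} := by
    refine hcont.comp (hshift.continuous.continuousOn) ?_
    intro w hw
    simp only [Set.mem_setOf_eq, him_shift]
    linarith [Set.mem_setOf_eq ▸ hw]
  have hsub : ∀ s : Set ℂ, s ⊆ {w : ℂ | w.im < 0} →
      DiffContOnCl ℂ G s := by
    intro s hs
    refine ⟨hGdiff.mono hs, hGcont.mono ?_⟩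
    refine closure_minimal ?_ (isClosed_le Complex.continuous_im continuous_const)
    exact fun w hw => show w.im ≤ 0 from le_of_lt (hs hw)
  have hq3sub : (Set.Iio (0:ℝ) ×ℂ Set.Iio 0) ⊆ {w : ℂ | w.im < 0} := fun w hw => hw.2
  have hq4sub : (Set.Ioi (0:ℝ) ×ℂ Set.Iio 0) ⊆ {w : ℂ | w.im < 0} := fun w hw => hw.2
  -- growth bound
  have hgrowthG : ∀ w : ℂ, w.im ≤ 0 →
      ‖G w‖ ≤ M * Real.exp (c * |y₀|) * Real.exp (c * ‖w‖ ^ (1:ℝ)) := by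
    intro w hw
    have h1 : ‖G w‖ ≤ M * Real.exp (c * ‖w + y₀ * Complex.I‖) := by
      refine hgrowth _ ?_
      rw [him_shift]; linarith
    refine h1.trans ?_
    rw [mul_assoc, ← Real.exp_add]
    have hnorm : ‖w + (y₀:ℂ) * Complex.I‖ ≤ ‖w‖ + |y₀| := by
      refine (norm_add_le _ _).trans ?_
      simp [Complex.norm_real]
    have : c * ‖w + (y₀:ℂ) * Complex.I‖ ≤ c * |y₀| + c * ‖w‖ ^ (1:ℝ) := by
      have : ‖w‖ ^ (1:ℝ) = ‖w‖ := by
        rw [Real.rpow_one]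
      rw [this]
      nlinarith [hnorm]
    exact mul_le_mul_of_nonneg_left (Real.exp_le_exp.2 this) hM.le
  have hB : ∀ s : Set ℂ, s ⊆ {w : ℂ | w.im < 0} →
      ∃ c' < (2:ℝ), ∃ B, G =O[Bornology.cobounded ℂ ⊓ Filter.principal s]
        fun w => Real.exp (B * ‖w‖ ^ c') := by
    intro s hs
    refine ⟨1, one_lt_two, c, ?_⟩
    rw [Asymptotics.isBigO_iff]
    refine ⟨M * Real.exp (c * |y₀|), ?_⟩
    rw [Filter.eventually_inf_principal]
    refine Filter.Eventually.of_forall fun w hw => ?_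
    have := hgrowthG w (le_of_lt (hs hw))
    simpa [Real.norm_eq_abs, abs_of_pos (Real.exp_pos _)] using this
  -- boundary bounds
  have hre3 : ∀ x : ℝ, x ≤ 0 → ‖G (x:ℂ)‖ ≤ A := fun x _ => hline x
  have hre4 : ∀ x : ℝ, 0 ≤ x → ‖G (x:ℂ)‖ ≤ A := fun x _ => hline x
  have himb : ∀ x : ℝ, x ≤ 0 → ‖G ((x:ℂ) * Complex.I)‖ ≤ A := by
    intro x hx
    have : (x:ℂ) * Complex.I + (y₀:ℂ) * Complex.I = ((x + y₀ : ℝ) : ℂ) * Complex.I := by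
      push_cast; ring
    simpa [hG, this] using hray (x + y₀) (by linarith)
  -- conclude
  intro z hz
  have key : ‖G (z - y₀ * Complex.I)‖ ≤ A := by
    have hre := le_total (z - (y₀:ℂ) * Complex.I).re 0
    have him' : (z - (y₀:ℂ) * Complex.I).im ≤ 0 := by simp; linarith
    rcases hre with h | h
    · exact PhragmenLindelof.quadrant_III (hsub _ hq3sub) (hB _ hq3sub) hre3 himb h him'
    · exact PhragmenLindelof.quadrant_IV (hsub _ hq4sub) (hB _ hq4sub) hre4 himb h him'
  simpa [hG, sub_add_cancel] using key
end
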